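/- Let d, m and a_1,…,a_d be positive integers, and suppose that every (a_1,…,a_d)-fractionally balanced d-partite hypergraph contains a matching of size m. Then there exists a positive integer N such that every (a_1,…,a_d,N)-fractionally balanced (d+1)-partite hypergraph contains a matching of size m. -/

import Mathlib

/-- The degree of vertex `v` (on side `t`) with respect to a weight function `f`
on a `d`-partite hypergraph with sides `Fin (a t)`. -/
def degree {d : ℕ} {a : Fin d → ℕ} (f : (∀ t, Fin (a t)) → ℝ)
    (t : Fin d) (v : Fin (a t)) : ℝ :=
  ∑ e : ∀ t, Fin (a t), if e t = v then f e else 0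

/-- `f` is a balanced weight function on the hypergraph `H`. -/
def IsBalanced {d : ℕ} {a : Fin d → ℕ} (H : Finset (∀ t, Fin (a t)))
    (f : (∀ t, Fin (a t)) → ℝ) : Prop :=
  (∀ e, 0 ≤ f e) ∧ (∀ e, e ∉ H → f e = 0) ∧
    ∀ t : Fin d, ∀ v w : Fin (a t), degree f t v = degree f t w

/-- `H` is `(a 0, …, a (d-1))`-fractionally balanced. -/
def FracBalanced {d : ℕ} {a : Fin d → ℕ} (H : Finset (∀ t, Fin (a t))) : Prop :=
  ∃ f, IsBalanced H f ∧ f ≠ 0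

/-- `M` is a matching in `H`. -/
def IsMatching {d : ℕ} {a : Fin d → ℕ} (H M : Finset (∀ t, Fin (a t))) : Prop :=
  M ⊆ H ∧ ∀ e ∈ M, ∀ f ∈ M, e ≠ f → ∀ t, e t ≠ f t

open Finset

section Basic

variable {n : ℕ} {b : Fin n → ℕ}

lemma degree_add (f g : (∀ t, Fin (b t)) → ℝ) (t : Fin n) (v : Fin (b t)) :
    degree (f + g) t v = degree f t v + degree g t v := by
  unfold degree
  rw [← Finset.sum_add_distrib]
  apply Finset.sum_congr rfl
  intro e _
  by_cases h : e t = v <;> simp [h]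

lemma degree_smul (c : ℝ) (f : (∀ t, Fin (b t)) → ℝ) (t : Fin n) (v : Fin (b t)) :
    degree (c • f) t v = c * degree f t v := by
  unfold degree
  rw [Finset.mul_sum]
  apply Finset.sum_congr rfl
  intro e _
  by_cases h : e t = v <;> simp [h]

lemma sum_degree (f : (∀ t, Fin (b t)) → ℝ) (t : Fin n) :
    ∑ v, degree f t v = ∑ e, f e := by
  unfold degree
  rw [Finset.sum_comm]
  apply Finset.sum_congr rfl
  intro e _
  simp

/-- For a balanced `f`, each degree equals mass / (side size). -/
lemma balanced_degree {H : Finset (∀ t, Fin (b t))} {f : (∀ t, Fin (b t)) → ℝ}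
    (hf : IsBalanced H f) (t : Fin n) (v : Fin (b t)) (hb : 0 < b t) :
    (b t : ℝ) * degree f t v = ∑ e, f e := by
  have h1 : ∑ w, degree f t w = ∑ e, f e := sum_degree f t
  have h2 : ∑ w : Fin (b t), degree f t w = (b t : ℝ) * degree f t v := by
    rw [Finset.sum_congr rfl (fun w _ => hf.2.2 t w v)]
    simp [mul_comm]
  rw [← h1, h2]

lemma mass_nonneg {H : Finset (∀ t, Fin (b t))} {f : (∀ t, Fin (b t)) → ℝ}
    (hf : IsBalanced H f) : 0 ≤ ∑ e, f e :=
  Finset.sum_nonneg fun e _ => hf.1 e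

lemma mass_pos {H : Finset (∀ t, Fin (b t))} {f : (∀ t, Fin (b t)) → ℝ}
    (hf : IsBalanced H f) (hne : f ≠ 0) : 0 < ∑ e, f e := by
  obtain ⟨e₀, he₀⟩ : ∃ e, f e ≠ 0 := by
    by_contra h
    push_neg at h
    exact hne (funext h)
  have : 0 < f e₀ := lt_of_le_of_ne (hf.1 e₀) (Ne.symm he₀)
  calc (0:ℝ) < f e₀ := this
    _ ≤ ∑ e, f e := Finset.single_le_sum (fun e _ => hf.1 e) (Finset.mem_univ e₀)

end Basic

section Vertex
variable {n : ℕ} {b : Fin n → ℕ}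

/-- From a fractionally balanced hypergraph, extract a balanced function of mass 1
with support of size at most `∑ t, b t`. -/
lemma exists_small_support (hn : 0 < n) (H : Finset (∀ t, Fin (b t)))
    (hFB : FracBalanced H) :
    ∃ f, IsBalanced H f ∧ (∑ e, f e) = 1 ∧
      (Finset.univ.filter (fun e => f e ≠ 0)).card ≤ ∑ t, b t := by
  classical
  obtain ⟨f₀, hf₀, hne⟩ := hFB
  have hc : 0 < ∑ e, f₀ e := mass_pos hf₀ hne
  -- the set of achievable support cardinalities
  set P : ((∀ t, Fin (b t)) → ℝ) → Prop :=
    fun f => IsBalanced H f ∧ (∑ e, f e) = 1 with hP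
  have hPne : ∃ f, P f := by
    refine ⟨(∑ e, f₀ e)⁻¹ • f₀, ⟨⟨fun e => ?_, fun e he => ?_, fun t v w => ?_⟩, ?_⟩⟩
    · exact mul_nonneg (inv_nonneg.2 hc.le) (hf₀.1 e)
    · simp [hf₀.2.1 e he]
    · rw [degree_smul, degree_smul, hf₀.2.2 t v w]
    · simp only [Pi.smul_apply, smul_eq_mul, ← Finset.mul_sum]
      field_simp
  set S : Set ℕ := {k | ∃ f, P f ∧ (Finset.univ.filter (fun e => f e ≠ 0)).card = k} with hS
  have hSne : S.Nonempty := by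
    obtain ⟨f, hf⟩ := hPne
    exact ⟨_, f, hf, rfl⟩
  obtain ⟨f, hPf, hcard⟩ := Nat.sInf_mem hSne
  set T : Finset (∀ t, Fin (b t)) := Finset.univ.filter (fun e => f e ≠ 0) with hT
  -- key claim: no nonzero "tangent" direction supported on T with all degrees 0
  have key : ∀ u : (∀ t, Fin (b t)) → ℝ, (∀ e, u e ≠ 0 → f e ≠ 0) →
      (∀ t v, degree u t v = 0) → u = 0 := by
    intro u hsupp hdeg
    by_contra hu
    have hmass : ∑ e, u e = 0 := by
      rw [← sum_degree u ⟨0, hn⟩]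
      simp [hdeg]
    -- there is a negative entry
    have hneg : ∃ e, u e < 0 := by
      by_contra h
      push_neg at h
      apply hu
      funext e
      exact (Finset.sum_eq_zero_iff_of_nonneg (fun e _ => h e)).1 hmass e (Finset.mem_univ e)
    obtain ⟨en, hen⟩ := hneg
    have hne' : (Finset.univ.filter (fun e => u e < 0)).Nonempty :=
      ⟨en, by simp [hen]⟩
    obtain ⟨es, hes, hmin⟩ := Finset.exists_min_image _ (fun e => f e / (-u e)) hne'
    rw [Finset.mem_filter] at hes
    have hus : u es < 0 := hes.2
    have hfs : 0 < f es :=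
      lt_of_le_of_ne (hPf.1.1 es) (Ne.symm (hsupp es (ne_of_lt hus)))
    set θ : ℝ := f es / (-u es) with hθ
    have hθpos : 0 < θ := div_pos hfs (neg_pos.2 hus)
    set g : (∀ t, Fin (b t)) → ℝ := f + θ • u with hg
    have hgnn : ∀ e, 0 ≤ g e := by
      intro e
      rcases le_or_gt 0 (u e) with h | h
      · have : 0 ≤ θ * u e := mul_nonneg hθpos.le h
        simpa [hg] using add_nonneg (hPf.1.1 e) this
      · have hmin' : θ ≤ f e / (-u e) := hmin e (by simp [h])
        have h1 : θ * (-u e) ≤ f e / (-u e) * (-u e) :=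
          mul_le_mul_of_nonneg_right hmin' (neg_pos.2 h).le
        rw [div_mul_cancel₀ _ (ne_of_gt (neg_pos.2 h))] at h1
        have : θ * u e ≥ -f e := by nlinarith
        simp only [hg, Pi.add_apply, Pi.smul_apply, smul_eq_mul]
        linarith
    have hgP : P g := by
      refine ⟨⟨hgnn, fun e he => ?_, fun t v w => ?_⟩, ?_⟩
      · have h1 : f e = 0 := hPf.1.2.1 e he
        have h2 : u e = 0 := by
          by_contra h; exact (hsupp e h) h1
        simp [hg, h1, h2]
      · simp only [hg]
        rw [degree_add, degree_add, degree_smul, degree_smul, hdeg, hdeg,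
          hPf.1.2.2 t v w]
      · simp only [hg, Pi.add_apply, Pi.smul_apply, smul_eq_mul]
        rw [Finset.sum_add_distrib, ← Finset.mul_sum, hmass, hPf.2]
        ring
    have hgs : g es = 0 := by
      have h1 : u es ≠ 0 := ne_of_lt hus
      simp only [hg, Pi.add_apply, Pi.smul_apply, smul_eq_mul, hθ]
      rw [div_neg, neg_mul, div_mul_cancel₀ _ h1]
      ring
    have hsub : (Finset.univ.filter (fun e => g e ≠ 0)) ⊂ T := by
      rw [Finset.ssubset_iff_of_subset]
      · exact ⟨es, by simp [hT, ne_of_gt hfs], by simp [hgs]⟩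
      · intro e he
        rw [Finset.mem_filter] at he ⊢
        refine ⟨Finset.mem_univ _, ?_⟩
        intro hfe
        have hue : u e = 0 := by
          by_contra h; exact (hsupp e h) hfe
        exact he.2 (by simp [hg, hfe, hue])
    have : (Finset.univ.filter (fun e => g e ≠ 0)).card ∈ S := ⟨g, hgP, rfl⟩
    have hlt : (Finset.univ.filter (fun e => g e ≠ 0)).card < sInf S :=
      hcard ▸ Finset.card_lt_card hsub
    exact absurd (Nat.sInf_le this) (not_le.2 hlt)
  -- now the dimension count
  refine ⟨f, hPf.1, hPf.2, ?_⟩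
  have : T.card ≤ ∑ t, b t := by
    let L : (↥T → ℝ) →ₗ[ℝ] (∀ t, Fin (b t) → ℝ) :=
      { toFun := fun w => fun t v => ∑ e : ↥T, if (e : ∀ t, Fin (b t)) t = v then w e else 0
        map_add' := by
          intro w₁ w₂
          funext t v
          simp only [Pi.add_apply]
          rw [← Finset.sum_add_distrib]
          apply Finset.sum_congr rfl
          intro e _
          by_cases h : (e : ∀ t, Fin (b t)) t = v <;> simp [h]
        map_smul' := by
          intro c w
          funext t v
          simp only [Pi.smul_apply, smul_eq_mul, RingHom.id_apply]
          rw [Finset.mul_sum]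
          apply Finset.sum_congr rfl
          intro e _
          by_cases h : (e : ∀ t, Fin (b t)) t = v <;> simp [h] }
    have hLinj : Function.Injective L := by
      rw [injective_iff_map_eq_zero]
      intro w hw
      set u : (∀ t, Fin (b t)) → ℝ :=
        fun e => if h : e ∈ T then w ⟨e, h⟩ else 0 with hu
      have hudeg : ∀ t v, degree u t v = 0 := by
        intro t v
        have hrw : degree u t v = L w t v := by
          unfold degree
          have h0 : ∀ e ∈ Finset.univ, e ∉ T → (if e t = v then u e else 0) = 0 := by
            intro e _ he
            simp [hu, he]
          rw [← Finset.sum_subset (Finset.subset_univ T) h0,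
            ← Finset.sum_attach T (fun e => if e t = v then u e else 0)]
          apply Finset.sum_congr rfl
          intro e _
          simp [hu, e.2]
        rw [hrw, hw]
        rfl
      have hu0 : u = 0 := by
        apply key u ?_ hudeg
        intro e he
        have : e ∈ T := by
          by_contra h
          exact he (by simp [hu, h])
        rw [hT, Finset.mem_filter] at this
        exact this.2
      funext x
      have := congrFun hu0 x
      simpa [hu, x.2] using this
    have h1 : Module.finrank ℝ (↥T → ℝ) = T.card := by
      rw [Module.finrank_fintype_fun_eq_card, Fintype.card_coe]
    have h3 : Module.finrank ℝ (∀ t, Fin (b t) → ℝ) = ∑ t, b t := by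
      rw [Module.finrank_pi_fintype]
      simp [Module.finrank_fintype_fun_eq_card]
    calc T.card = Module.finrank ℝ (↥T → ℝ) := h1.symm
      _ ≤ Module.finrank ℝ (∀ t, Fin (b t) → ℝ) :=
          LinearMap.finrank_le_finrank_of_injective hLinj
      _ = ∑ t, b t := h3
  exact this

end Vertex

section Eps
variable {d : ℕ} {a : Fin d → ℕ}

/-- total imbalance of a mass-one weight function -/
noncomputable def imb (a : Fin d → ℕ) (u : (∀ t, Fin (a t)) → ℝ) : ℝ :=
  ∑ t, ∑ x, |(a t : ℝ) * degree u t x - 1|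

lemma imb_nonneg (u : (∀ t, Fin (a t)) → ℝ) : 0 ≤ imb a u :=
  Finset.sum_nonneg fun t _ => Finset.sum_nonneg fun x _ => abs_nonneg _

lemma imb_continuous : Continuous (imb a) := by
  apply continuous_finset_sum
  intro t _
  apply continuous_finset_sum
  intro x _
  apply Continuous.abs
  apply Continuous.sub ?_ continuous_const
  apply Continuous.mul continuous_const
  unfold degree
  apply continuous_finset_sum
  intro e _
  by_cases h : e t = x
  · simpa [h] using continuous_apply e
  · simp only [h, if_false]
    exact continuous_const

lemma eps_of_finset (ha : ∀ t, 0 < a t) (S : Finset (∀ t, Fin (a t))) :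
    ∃ δ > 0, ∀ u : (∀ t, Fin (a t)) → ℝ, (∀ e, 0 ≤ u e) → (∀ e ∉ S, u e = 0) →
      (∑ e, u e) = 1 → imb a u < δ → FracBalanced S := by
  classical
  by_cases hFB : FracBalanced S
  · exact ⟨1, one_pos, fun _ _ _ _ _ => hFB⟩
  set K : Set ((∀ t, Fin (a t)) → ℝ) :=
    {u | (∀ e, 0 ≤ u e) ∧ (∀ e ∉ S, u e = 0) ∧ (∑ e, u e) = 1} with hK
  by_cases hne : K.Nonempty
  · have hclosed : IsClosed K := by
      have h1 : IsClosed {u : (∀ t, Fin (a t)) → ℝ | ∀ e, 0 ≤ u e} := by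
        rw [show {u : (∀ t, Fin (a t)) → ℝ | ∀ e, 0 ≤ u e} = ⋂ e, {u | 0 ≤ u e} by
          ext u; simp [Set.mem_iInter]]
        exact isClosed_iInter fun e => isClosed_le continuous_const (continuous_apply e)
      have h2 : IsClosed {u : (∀ t, Fin (a t)) → ℝ | ∀ e ∉ S, u e = 0} := by
        rw [show {u : (∀ t, Fin (a t)) → ℝ | ∀ e ∉ S, u e = 0}
            = ⋂ e, {u | e ∉ S → u e = 0} by ext u; simp [Set.mem_iInter]]
        apply isClosed_iInter
        intro e
        by_cases he : e ∈ S
        · simp [he]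
        · rw [show {u : (∀ t, Fin (a t)) → ℝ | e ∉ S → u e = 0} = {u | u e = 0} by
            ext u; simp [he]]
          exact isClosed_eq (continuous_apply e) continuous_const
      have h3 : IsClosed {u : (∀ t, Fin (a t)) → ℝ | (∑ e, u e) = 1} :=
        isClosed_eq (continuous_finset_sum _ fun e _ => continuous_apply e)
          continuous_const
      rw [hK, Set.setOf_and, Set.setOf_and]
      exact h1.inter (h2.inter h3)
    have hbdd : Bornology.IsBounded K := by
      apply (Metric.isBounded_closedBall (x := (0 : (∀ t, Fin (a t)) → ℝ)) (r := 1)).subset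
      intro u hu
      rw [Metric.mem_closedBall, dist_zero_right]
      rw [pi_norm_le_iff_of_nonneg zero_le_one]
      intro e
      rw [Real.norm_eq_abs, abs_of_nonneg (hu.1 e)]
      calc u e ≤ ∑ e', u e' := Finset.single_le_sum (fun e' _ => hu.1 e') (mem_univ e)
        _ = 1 := hu.2.2
    have hcomp : IsCompact K := Metric.isCompact_of_isClosed_isBounded hclosed hbdd
    obtain ⟨u₀, hu₀K, hmin⟩ := hcomp.exists_isMinOn hne imb_continuous.continuousOn
    refine ⟨imb a u₀, ?_, ?_⟩
    · rcases (imb_nonneg u₀).lt_or_eq with h | h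
      · exact h
      exfalso
      apply hFB
      have hz : ∀ t, ∀ x : Fin (a t), (a t : ℝ) * degree u₀ t x - 1 = 0 := by
        intro t x
        have h1 := (Finset.sum_eq_zero_iff_of_nonneg
          (fun t _ => Finset.sum_nonneg fun x _ => abs_nonneg _)).1 h.symm t (mem_univ t)
        have h2 := (Finset.sum_eq_zero_iff_of_nonneg
          (fun x _ => abs_nonneg _)).1 h1 x (mem_univ x)
        exact abs_eq_zero.1 h2
      refine ⟨u₀, ⟨hu₀K.1, hu₀K.2.1, fun t v w => ?_⟩, ?_⟩
      · have hat : (a t : ℝ) ≠ 0 := Nat.cast_ne_zero.2 (ha t).ne'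
        have hv := hz t v
        have hw := hz t w
        have : (a t : ℝ) * degree u₀ t v = (a t : ℝ) * degree u₀ t w := by linarith
        exact mul_left_cancel₀ hat this
      · intro h0
        rw [h0] at hu₀K
        simpa using hu₀K.2.2
    · intro u h1 h2 h3 hlt
      exact absurd (hmin (Set.mem_setOf.2 ⟨h1, h2, h3⟩)) (not_le.2 hlt)
  · refine ⟨1, one_pos, fun u h1 h2 h3 _ => absurd ⟨u, h1, h2, h3⟩ hne⟩

/-- THE uniform epsilon. -/
lemma exists_eps (ha : ∀ t, 0 < a t) :
    ∃ ε > 0, ∀ w : (∀ t, Fin (a t)) → ℝ, (∀ e, 0 ≤ w e) → w ≠ 0 →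
      (∀ t x, |(a t : ℝ) * degree w t x - ∑ e, w e| ≤ ε * ∑ e, w e) →
      FracBalanced (Finset.univ.filter (fun e => w e ≠ 0)) := by
  classical
  choose δf hδpos hδprop using eps_of_finset ha
  have huniv : (Finset.univ : Finset (Finset (∀ t, Fin (a t)))).Nonempty :=
    ⟨∅, mem_univ _⟩
  set εm : ℝ := Finset.univ.inf' huniv δf with hεm
  have hεmpos : 0 < εm := by
    rw [hεm, Finset.lt_inf'_iff]
    exact fun S _ => hδpos S
  set Ap : ℝ := ∑ t, (a t : ℝ) with hAp
  have hAp0 : 0 ≤ Ap := Finset.sum_nonneg fun t _ => Nat.cast_nonneg _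
  refine ⟨εm / (2 * (Ap + 1)), by positivity, ?_⟩
  intro w hw0 hwne hnear
  have hmass : 0 < ∑ e, w e := by
    obtain ⟨e₀, he₀⟩ : ∃ e, w e ≠ 0 := by
      by_contra h
      push_neg at h
      exact hwne (funext h)
    calc (0:ℝ) < w e₀ := lt_of_le_of_ne (hw0 e₀) (Ne.symm he₀)
      _ ≤ ∑ e, w e := Finset.single_le_sum (fun e _ => hw0 e) (mem_univ e₀)
  set S : Finset (∀ t, Fin (a t)) := Finset.univ.filter (fun e => w e ≠ 0) with hSdef
  set u : (∀ t, Fin (a t)) → ℝ := (∑ e, w e)⁻¹ • w with hu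
  apply hδprop S u
  · exact fun e => mul_nonneg (inv_nonneg.2 hmass.le) (hw0 e)
  · intro e he
    rw [hSdef] at he
    simp only [Finset.mem_filter, mem_univ, true_and, not_not] at he
    simp [hu, he]
  · simp only [hu, Pi.smul_apply, smul_eq_mul, ← Finset.mul_sum]
    field_simp
  · -- imb a u < δf S
    set ε' : ℝ := εm / (2 * (Ap + 1)) with hε'
    have hterm : ∀ t x, |(a t : ℝ) * degree u t x - 1| ≤ ε' := by
      intro t x
      have hde : degree u t x = (∑ e, w e)⁻¹ * degree w t x := degree_smul _ _ _ _
      have h1 : (a t : ℝ) * degree u t x - 1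
          = (∑ e, w e)⁻¹ * ((a t : ℝ) * degree w t x - ∑ e, w e) := by
        rw [hde]
        field_simp
      rw [h1, abs_mul, abs_of_nonneg (inv_nonneg.2 hmass.le)]
      calc (∑ e, w e)⁻¹ * |(a t : ℝ) * degree w t x - ∑ e, w e|
          ≤ (∑ e, w e)⁻¹ * (ε' * ∑ e, w e) :=
            mul_le_mul_of_nonneg_left (hnear t x) (inv_nonneg.2 hmass.le)
        _ = ε' := by field_simp
    have hbound : imb a u ≤ ε' * Ap := by
      unfold imb
      calc ∑ t, ∑ x, |(a t : ℝ) * degree u t x - 1|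
          ≤ ∑ t : Fin d, ∑ _x : Fin (a t), ε' :=
            Finset.sum_le_sum fun t _ => Finset.sum_le_sum fun x _ => hterm t x
        _ = ∑ t : Fin d, (a t : ℝ) * ε' := by
            simp [Finset.sum_const, nsmul_eq_mul]
        _ = Ap * ε' := by rw [hAp, ← Finset.sum_mul]
        _ = ε' * Ap := mul_comm _ _
    have h5 : ε' * Ap < εm := by
      rw [hε', div_mul_eq_mul_div, div_lt_iff₀ (by positivity)]
      nlinarith [hεmpos, hAp0]
    have h6 : εm ≤ δf S := Finset.inf'_le _ (mem_univ S)
    exact lt_of_le_of_lt hbound (lt_of_lt_of_le h5 h6)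
end Eps

section Snoc
variable {d : ℕ} (a : Fin d → ℕ) (N : ℕ)

abbrev b' : Fin (d+1) → ℕ := Fin.snoc (α := fun _ => ℕ) a N

/-- extend an edge by a last coordinate -/
def exte (e : ∀ t, Fin (a t)) (v : Fin N) : ∀ t : Fin (d+1), Fin (b' a N t) :=
  Fin.lastCases (Fin.cast (by simp [b']) v) (fun s => Fin.cast (by simp [b']) (e s))

lemma exte_castSucc (e : ∀ t, Fin (a t)) (v : Fin N) (t : Fin d) :
    exte a N e v t.castSucc = Fin.cast (by simp [b']) (e t) := by
  simp [exte]

lemma exte_last (e : ∀ t, Fin (a t)) (v : Fin N) :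
    exte a N e v (Fin.last d) = Fin.cast (by simp [b']) v := by
  simp [exte]

lemma cast_eq_iff {n m : ℕ} (h : n = m) (y : Fin n) (x : Fin m) :
    Fin.cast h y = x ↔ y = Fin.cast h.symm x := by
  subst h; simp

lemma cast_inj' {n m : ℕ} (h : n = m) (y z : Fin n) :
    Fin.cast h y = Fin.cast h z ↔ y = z := by
  subst h; simp

def extEquiv : ((∀ t, Fin (a t)) × Fin N) ≃ (∀ t : Fin (d+1), Fin (b' a N t)) where
  toFun p := exte a N p.1 p.2
  invFun e' := (fun t => Fin.cast (by simp [b']) (e' t.castSucc),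
    Fin.cast (by simp [b']) (e' (Fin.last d)))
  left_inv p := by
    refine Prod.ext (funext fun t => ?_) ?_
    · apply Fin.ext
      simp [exte_castSucc]
    · apply Fin.ext
      simp [exte_last]
  right_inv e' := by
    funext t
    induction t using Fin.lastCases with
    | last => apply Fin.ext; simp [exte_last]
    | cast s => apply Fin.ext; simp [exte_castSucc]

lemma sum_ext (g : (∀ t : Fin (d+1), Fin (b' a N t)) → ℝ) :
    ∑ e', g e' = ∑ v : Fin N, ∑ e : ∀ t, Fin (a t), g (exte a N e v) := by
  rw [← Equiv.sum_comp (extEquiv a N) g, Fintype.sum_prod_type_right]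
  rfl

/-- degree in an original coordinate, fiber-decomposed -/
lemma degree_castSucc (f : (∀ t : Fin (d+1), Fin (b' a N t)) → ℝ)
    (t : Fin d) (x : Fin (a t)) :
    degree f t.castSucc (Fin.cast (by simp [b'] : a t = b' a N t.castSucc) x)
      = ∑ v : Fin N, ∑ e : ∀ t, Fin (a t),
          if e t = x then f (exte a N e v) else 0 := by
  unfold degree
  rw [sum_ext a N]
  apply Finset.sum_congr rfl
  intro v _
  apply Finset.sum_congr rfl
  intro e _
  apply if_congr _ rfl rfl
  rw [exte_castSucc, cast_eq_iff]
  constructor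
  · intro h; apply Fin.ext; have := congrArg Fin.val h; simpa using this
  · intro h; apply Fin.ext; have := congrArg Fin.val h; simpa using this

/-- degree in the last coordinate = fiber mass -/
lemma degree_last (f : (∀ t : Fin (d+1), Fin (b' a N t)) → ℝ) (v : Fin N) :
    degree f (Fin.last d) (Fin.cast (by simp [b'] : N = b' a N (Fin.last d)) v)
      = ∑ e : ∀ t, Fin (a t), f (exte a N e v) := by
  unfold degree
  rw [sum_ext a N]
  have hcond : ∀ (u : Fin N) (e : ∀ t, Fin (a t)),
      (exte a N e u (Fin.last d) = Fin.cast (by simp [b'] : N = b' a N (Fin.last d)) v ↔ u = v) := by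
    intro u e
    rw [exte_last, cast_inj']
  calc ∑ u : Fin N, ∑ e, (if exte a N e u (Fin.last d)
        = Fin.cast (by simp [b'] : N = b' a N (Fin.last d)) v then f (exte a N e u) else 0)
      = ∑ u : Fin N, (if u = v then ∑ e, f (exte a N e u) else 0) := by
        apply Finset.sum_congr rfl
        intro u _
        by_cases h : u = v
        · simp only [h, if_true]
          apply Finset.sum_congr rfl
          intro e _
          rw [if_pos ((hcond v e).2 rfl)]
        · rw [if_neg h]
          apply Finset.sum_eq_zero
          intro e _
          rw [if_neg (fun hc => h ((hcond u e).1 hc))]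
    _ = ∑ e, f (exte a N e v) := by
        rw [Finset.sum_ite_eq' Finset.univ v (fun u => ∑ e, f (exte a N e u))]
        simp


set_option maxHeartbeats 2000000

/-- If every `(a 1, …, a d)`-fractionally balanced `d`-partite hypergraph has a
matching of size `m`, then for some `N` every `(a 1, …, a d, N)`-fractionally
balanced `(d+1)`-partite hypergraph has a matching of size `m`. -/
theorem bm_add_coordinate (d m : ℕ) (hd : 0 < d) (hm : 0 < m)
    (a : Fin d → ℕ) (ha : ∀ t, 0 < a t)
    (hyp : ∀ H : Finset (∀ t, Fin (a t)), FracBalanced H →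
      ∃ M, IsMatching H M ∧ M.card = m) :
    ∃ N : ℕ, 0 < N ∧
      ∀ H' : Finset (∀ t : Fin (d + 1), Fin (Fin.snoc (α := fun _ => ℕ) a N t)),
        FracBalanced H' → ∃ M, IsMatching H' M ∧ M.card = m := by
  classical
  obtain ⟨ε, hε, hεprop⟩ := exists_eps ha
  set A : ℕ := ∑ t, a t with hA
  have hA1 : 1 ≤ A := by
    calc 1 ≤ a ⟨0, hd⟩ := ha _
      _ ≤ A := Finset.single_le_sum (f := fun t => a t)
          (fun t _ => Nat.zero_le _) (mem_univ _)
  obtain ⟨N, hN⟩ := exists_nat_gt (2*(A:ℝ) + 2*(A:ℝ)*(A:ℝ)/ε)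
  have hAr : (1:ℝ) ≤ (A:ℝ) := by exact_mod_cast hA1
  have hN2A : 2*(A:ℝ) < N := by
    have : 0 ≤ 2*(A:ℝ)*(A:ℝ)/ε := by positivity
    linarith
  have hNA2 : 2*(A:ℝ)*(A:ℝ)/ε < N := by linarith
  have hNr : (0:ℝ) < N := by linarith
  have hNpos : 0 < N := by exact_mod_cast hNr
  refine ⟨N, hNpos, ?_⟩
  intro H' hFB'
  obtain ⟨f, hbal, hmass, hsupp⟩ := exists_small_support (Nat.succ_pos d) H' hFB'
  have hb'pos : ∀ t : Fin (d+1), 0 < b' a N t := by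
    intro t
    induction t using Fin.lastCases with
    | last => simpa [b'] using hNpos
    | cast s => simpa [b'] using ha s
  have hsum_b : ∑ t : Fin (d+1), b' a N t = A + N := by
    rw [Fin.sum_univ_castSucc]
    simp [b', hA]
  -- used repeatedly
  have hcast_t : ∀ t : Fin d, a t = b' a N t.castSucc := fun t => by simp [b']
  have hcast_l : N = b' a N (Fin.last d) := by simp [b']
  have hdeg_t : ∀ (t : Fin d) (x' : Fin (b' a N t.castSucc)),
      (a t : ℝ) * degree f t.castSucc x' = 1 := by
    intro t x'
    have h1 := balanced_degree hbal t.castSucc x' (hb'pos _)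
    rw [hmass] at h1
    rw [show ((a t : ℕ) : ℝ) = ((b' a N t.castSucc : ℕ) : ℝ) from by rw [hcast_t t]]
    exact h1
  have hdeg_l : ∀ v' : Fin (b' a N (Fin.last d)),
      (N : ℝ) * degree f (Fin.last d) v' = 1 := by
    intro v'
    have h1 := balanced_degree hbal (Fin.last d) v' (hb'pos _)
    rw [hmass] at h1
    rw [show ((N : ℕ) : ℝ) = ((b' a N (Fin.last d) : ℕ) : ℝ) from by rw [← hcast_l]]
    exact h1
  -- fiber masses
  have hfib : ∀ v : Fin N, ∑ e, f (exte a N e v) = 1/(N:ℝ) := by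
    intro v
    have h1 := hdeg_l (Fin.cast hcast_l v)
    rw [degree_last a N f v] at h1
    field_simp at h1 ⊢
    linarith
  -- support and fibers
  set T : Finset (∀ t : Fin (d+1), Fin (b' a N t)) :=
    univ.filter (fun e' => f e' ≠ 0) with hT
  set lst : (∀ t : Fin (d+1), Fin (b' a N t)) → Fin N :=
    fun e' => Fin.cast hcast_l.symm (e' (Fin.last d)) with hlst
  set Fib : Fin N → Finset (∀ t : Fin (d+1), Fin (b' a N t)) :=
    fun v => T.filter (fun e' => lst e' = v) with hFib
  have hlst_ext : ∀ (e : ∀ t, Fin (a t)) (v : Fin N), lst (exte a N e v) = v := by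
    intro e v
    rw [hlst]
    apply Fin.ext
    simp [exte_last]
  have hcard_sum : ∑ v : Fin N, (Fib v).card = T.card :=
    (Finset.card_eq_sum_card_fiberwise (fun e' _ => mem_univ (lst e'))).symm
  have hfib_ne : ∀ v : Fin N, (Fib v).Nonempty := by
    intro v
    have h1 : (0:ℝ) < ∑ e, f (exte a N e v) := by
      rw [hfib v]
      positivity
    obtain ⟨e, _, he⟩ := Finset.exists_lt_of_sum_lt (by simpa using h1 :
      ∑ e : (∀ t, Fin (a t)), (0:ℝ) < ∑ e, f (exte a N e v))
    exact ⟨exte a N e v, by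
      rw [hFib, Finset.mem_filter, hT, Finset.mem_filter]
      exact ⟨⟨mem_univ _, fun h0 => absurd h0.symm (ne_of_lt he)⟩, hlst_ext e v⟩⟩
  set I : Finset (Fin N) := univ.filter (fun v => (Fib v).card = 1) with hI
  have hIcompl : (univ \ I).card ≤ A := by
    have h2 : ∀ v ∈ univ \ I, 2 ≤ (Fib v).card := by
      intro v hv
      rw [Finset.mem_sdiff, hI, Finset.mem_filter] at hv
      have h1 : 1 ≤ (Fib v).card := Finset.card_pos.2 (hfib_ne v)
      have : (Fib v).card ≠ 1 := fun h => hv.2 ⟨mem_univ v, h⟩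
      omega
    have h3 : ∑ v ∈ I, (Fib v).card + ∑ v ∈ univ \ I, (Fib v).card
        = ∑ v : Fin N, (Fib v).card := by
      rw [← Finset.sum_union (Finset.disjoint_sdiff)]
      congr 1
      exact Finset.union_sdiff_of_subset (Finset.subset_univ I)
    have h4 : ∑ v : Fin N, (Fib v).card ≤ A + N := by
      rw [hcard_sum]
      calc T.card ≤ ∑ t : Fin (d+1), b' a N t := hsupp
        _ = A + N := hsum_b
    have h5 : I.card ≤ ∑ v ∈ I, (Fib v).card := by
      calc I.card = ∑ v ∈ I, 1 := by simp
        _ ≤ _ := Finset.sum_le_sum (fun v hv => by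
            rw [hI, Finset.mem_filter] at hv
            omega)
    have h6 : 2 * (univ \ I).card ≤ ∑ v ∈ univ \ I, (Fib v).card := by
      calc 2 * (univ \ I).card = ∑ v ∈ univ \ I, 2 := by
            rw [Finset.sum_const]; ring
        _ ≤ _ := Finset.sum_le_sum h2
    have h7 : I.card + (univ \ I).card = N := by
      rw [← Finset.card_union_of_disjoint (Finset.disjoint_sdiff),
        Finset.union_sdiff_of_subset (Finset.subset_univ I)]
      simp
    omega
  have hIcard : N ≤ I.card + A := by
    have h7 : I.card + (univ \ I).card = N := by
      rw [← Finset.card_union_of_disjoint (Finset.disjoint_sdiff),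
        Finset.union_sdiff_of_subset (Finset.subset_univ I)]
      simp
    omega
  -- the projected weight function
  set w : (∀ t, Fin (a t)) → ℝ := fun e => ∑ v ∈ I, f (exte a N e v) with hw
  have hw0 : ∀ e, 0 ≤ w e := fun e => Finset.sum_nonneg fun v _ => hbal.1 _
  have hmassw : ∑ e, w e = (I.card : ℝ) / N := by
    rw [hw, Finset.sum_comm]
    rw [Finset.sum_congr rfl (fun v _ => hfib v)]
    rw [Finset.sum_const]
    simp [div_eq_mul_inv]
  have hmassw_ub : ∑ e, w e ≤ 1 := by
    rw [hmassw, div_le_one hNr]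
    exact_mod_cast Finset.card_le_card (Finset.subset_univ I) |>.trans (by simp)
  have hmassw_lb : 1 - (A:ℝ)/N ≤ ∑ e, w e := by
    rw [hmassw, le_div_iff₀ hNr]
    have h8 : (1 - (A:ℝ)/N) * N = N - A := by field_simp
    have h9 : (N:ℝ) ≤ (I.card:ℝ) + A := by exact_mod_cast hIcard
    rw [h8]
    linarith
  -- degree bounds for w
  have hdegw : ∀ (t : Fin d) (x : Fin (a t)),
      degree w t x ≤ 1/(a t : ℝ) ∧ 1/(a t:ℝ) - (A:ℝ)/N ≤ degree w t x := by
    intro t x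
    set D : Fin N → ℝ := fun v => ∑ e, if e t = x then f (exte a N e v) else 0 with hD
    have hD0 : ∀ v, 0 ≤ D v := fun v => Finset.sum_nonneg fun e _ => by
      by_cases h : e t = x <;> simp [h, hbal.1 _]
    have hDub : ∀ v, D v ≤ 1/(N:ℝ) := by
      intro v
      rw [← hfib v]
      apply Finset.sum_le_sum
      intro e _
      by_cases h : e t = x <;> simp [h, hbal.1 _]
    have hDtot : ∑ v : Fin N, D v = 1/(a t : ℝ) := by
      have h2 := degree_castSucc a N f t x
      have h1 := hdeg_t t (Fin.cast (hcast_t t) x)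
      rw [h2] at h1
      have hat : (0:ℝ) < (a t : ℝ) := by exact_mod_cast ha t
      rw [hD]
      field_simp at h1 ⊢
      linarith
    have hdw : degree w t x = ∑ v ∈ I, D v := by
      unfold degree
      calc ∑ e, (if e t = x then w e else 0)
          = ∑ e, ∑ v ∈ I, (if e t = x then f (exte a N e v) else 0) := by
            apply Finset.sum_congr rfl
            intro e _
            by_cases h : e t = x
            · simp only [h, if_true]; rfl
            · simp [h]
        _ = ∑ v ∈ I, D v := by rw [Finset.sum_comm]
    constructor
    · rw [hdw, ← hDtot]
      exact Finset.sum_le_sum_of_subset_of_nonneg (Finset.subset_univ I)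
        (fun v _ _ => hD0 v)
    · have hsd : ∑ v ∈ univ \ I, D v + ∑ v ∈ I, D v = ∑ v : Fin N, D v :=
        Finset.sum_sdiff (Finset.subset_univ I)
      have hsd2 : ∑ v ∈ univ \ I, D v ≤ (A:ℝ)/N := by
        calc ∑ v ∈ univ \ I, D v ≤ ∑ _v ∈ univ \ I, 1/(N:ℝ) :=
              Finset.sum_le_sum (fun v _ => hDub v)
          _ = ((univ \ I).card : ℝ) * (1/(N:ℝ)) := by
              rw [Finset.sum_const]
              simp [nsmul_eq_mul]
          _ ≤ (A:ℝ) * (1/(N:ℝ)) := by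
              apply mul_le_mul_of_nonneg_right
              · exact_mod_cast hIcompl
              · positivity
          _ = (A:ℝ)/N := by ring
      rw [hdw]
      linarith [hDtot, hsd]
  have hhalf : (A:ℝ)/N ≤ 1/2 := by
    rw [div_le_iff₀ hNr]
    linarith
  have hNA2' : 2*(A:ℝ)*(A:ℝ) < ε*(N:ℝ) := by
    rw [div_lt_iff₀ hε] at hNA2
    linarith
  have hAA : (A:ℝ)*(A:ℝ)/N ≤ ε/2 := by
    rw [div_le_iff₀ hNr]
    linarith
  have hANAA : (A:ℝ)/N ≤ (A:ℝ)*(A:ℝ)/N := by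
    have h9 : (A:ℝ) ≤ (A:ℝ)*(A:ℝ) := by nlinarith
    have h10 := mul_le_mul_of_nonneg_right h9 (by positivity : (0:ℝ) ≤ ((N:ℝ))⁻¹)
    simpa [div_eq_mul_inv] using h10
  -- near balance
  have hnear : ∀ (t : Fin d) (x : Fin (a t)),
      |(a t : ℝ) * degree w t x - ∑ e, w e| ≤ ε * ∑ e, w e := by
    intro t x
    obtain ⟨hub, hlb⟩ := hdegw t x
    have hat : (1:ℝ) ≤ (a t : ℝ) := by exact_mod_cast ha t
    have hatA : (a t : ℝ) ≤ (A:ℝ) := by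
      have : a t ≤ A := Finset.single_le_sum (f := fun t => a t)
        (fun t _ => Nat.zero_le _) (mem_univ t)
      exact_mod_cast this
    have hP_ub : (a t : ℝ) * degree w t x ≤ 1 := by
      calc (a t : ℝ) * degree w t x ≤ (a t : ℝ) * (1/(a t:ℝ)) :=
            mul_le_mul_of_nonneg_left hub (by linarith)
        _ = 1 := by field_simp
    have hP_lb : 1 - (A:ℝ)*(A:ℝ)/N ≤ (a t : ℝ) * degree w t x := by
      have h1 : (a t:ℝ) * (1/(a t:ℝ) - (A:ℝ)/N) ≤ (a t : ℝ) * degree w t x :=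
        mul_le_mul_of_nonneg_left hlb (by linarith)
      have h2 : (a t:ℝ) * (1/(a t:ℝ) - (A:ℝ)/N) = 1 - (a t:ℝ)*(A:ℝ)/N := by
        field_simp
      have h3 : (a t:ℝ)*(A:ℝ)/N ≤ (A:ℝ)*(A:ℝ)/N := by
        have h9 : (a t:ℝ)*(A:ℝ) ≤ (A:ℝ)*(A:ℝ) :=
          mul_le_mul_of_nonneg_right hatA (by linarith)
        have h10 := mul_le_mul_of_nonneg_right h9 (by positivity : (0:ℝ) ≤ ((N:ℝ))⁻¹)
        simpa [div_eq_mul_inv] using h10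
      linarith
    have hmass_half : 1/2 ≤ ∑ e, w e := by linarith
    have hemass : ε/2 ≤ ε * ∑ e, w e := by nlinarith
    rw [abs_le]
    constructor
    · linarith
    · linarith
  -- w is nonzero
  have hwmass_pos : 0 < ∑ e, w e := by linarith
  have hwne : w ≠ 0 := by
    intro h0
    rw [h0] at hwmass_pos
    simp at hwmass_pos
  have hFBS := hεprop w hw0 hwne hnear
  obtain ⟨M, hM, hMc⟩ := hyp _ hFBS
  -- lift the matching
  haveI : Nonempty (Fin N) := ⟨⟨0, hNpos⟩⟩
  have hchoice : ∀ e ∈ M, ∃ v ∈ I, f (exte a N e v) ≠ 0 := by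
    intro e he
    have hwe : w e ≠ 0 := (Finset.mem_filter.1 (hM.1 he)).2
    by_contra hcon
    push_neg at hcon
    apply hwe
    rw [hw]
    exact Finset.sum_eq_zero hcon
  choose! φ hφI hφf using hchoice
  have hΦinj : Set.InjOn (fun e => exte a N e (φ e)) ↑M := by
    intro e₁ _ e₂ _ hEq
    funext t
    have hc := congrFun hEq t.castSucc
    simp only [] at hc
    simp only [exte_castSucc] at hc
    exact (cast_inj' _ _ _).1 hc
  refine ⟨M.image (fun e => exte a N e (φ e)), ⟨?_, ?_⟩, ?_⟩
  · intro x hx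
    obtain ⟨e, he, rfl⟩ := Finset.mem_image.1 hx
    by_contra hnot
    exact hφf e he (hbal.2.1 _ hnot)
  · intro x hx y hy hxy
    obtain ⟨e₁, he₁, rfl⟩ := Finset.mem_image.1 hx
    obtain ⟨e₂, he₂, rfl⟩ := Finset.mem_image.1 hy
    have hne12 : e₁ ≠ e₂ := by
      intro h
      subst h
      exact hxy rfl
    have hφne : φ e₁ ≠ φ e₂ := by
      intro hveq
      have hv1 : φ e₁ ∈ I := hφI e₁ he₁
      rw [hI, Finset.mem_filter] at hv1
      have hcard1 : (Fib (φ e₁)).card ≤ 1 := le_of_eq hv1.2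
      have hm1 : exte a N e₁ (φ e₁) ∈ Fib (φ e₁) := by
        rw [hFib]
        rw [Finset.mem_filter, hT, Finset.mem_filter]
        exact ⟨⟨mem_univ _, hφf e₁ he₁⟩, hlst_ext e₁ (φ e₁)⟩
      have hm2 : exte a N e₂ (φ e₂) ∈ Fib (φ e₁) := by
        rw [hFib, Finset.mem_filter, hT, Finset.mem_filter]
        refine ⟨⟨mem_univ _, hφf e₂ he₂⟩, ?_⟩
        rw [hlst_ext e₂ (φ e₂), hveq]
      exact absurd (Finset.card_le_one.1 hcard1 _ hm1 _ hm2) hxy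
    intro tt
    induction tt using Fin.lastCases with
    | last =>
      intro hc
      rw [exte_last, exte_last] at hc
      exact hφne ((cast_inj' _ _ _).1 hc)
    | cast s =>
      intro hc
      rw [exte_castSucc, exte_castSucc] at hc
      exact hM.2 e₁ he₁ e₂ he₂ hne12 s ((cast_inj' _ _ _).1 hc)
  · rw [Finset.card_image_of_injOn hΦinj, hMc]
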